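/- arXiv:2010.01743 — 8 statements merged into one kernel-verified Lean document; each statement's English description precedes it below -/
import Mathlib

section
/- Let a_i mod d_i (i = 1,…,r) be an exact covering system with all moduli d_i nonzero and degree r ≥ 2. Then the associated ECSD has only finitely many components: there is a finite set T of integers such that every integer n is related under EqvGen R to some element of T. -/
/-- An ECSD of degree at least 2 has only finitely many components: there is a
finite set `T` of integers such that every integer is related under `EqvGen R`
to some element of `T`. -/
theorem ecsd_finitely_many_components (r : ℕ) (hr : 2 ≤ r) (a d : Fin r → ℤ)
    (hd : ∀ i, d i ≠ 0)
    (hexact : ∀ n : ℤ, ∃! i : Fin r, d i ∣ n - a i)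
    (R : ℤ → ℤ → Prop) (hR : ∀ n m : ℤ, R n m ↔ ∃ i : Fin r, m = d i * n + a i) :
    ∃ T : Finset ℤ, ∀ n : ℤ, ∃ t ∈ T, Relation.EqvGen R n t := by
  have hd2 : ∀ i, 2 ≤ |d i| := by
    intro i
    by_contra h
    push_neg at h
    have h1 : |d i| = 1 := by
      have := abs_pos.mpr (hd i); omega
    obtain ⟨j, hj⟩ := Fintype.exists_ne_of_one_lt_card (by simpa using (show 1 < r by omega)) i
    obtain ⟨k, hk, huniq⟩ := hexact (a j)
    have hi : d i ∣ a j - a i := by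
      rw [← abs_dvd, h1]; exact one_dvd _
    have hjd : d j ∣ a j - a j := by simp
    exact hj ((huniq j hjd).trans (huniq i hi).symm)
  set A : ℤ := ∑ i, |a i| with hA
  have hAi : ∀ i, |a i| ≤ A :=
    fun i => Finset.single_le_sum (f := fun j => |a j|) (fun j _ => abs_nonneg _) (Finset.mem_univ i)
  refine ⟨Finset.Icc (-A) A, ?_⟩
  suffices h : ∀ k : ℕ, ∀ n : ℤ, n.natAbs = k →
      ∃ t ∈ Finset.Icc (-A) A, Relation.EqvGen R n t by
    intro n; exact h n.natAbs n rfl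
  intro k
  induction k using Nat.strong_induction_on with
  | _ k ih =>
    intro n hn
    by_cases hcase : |n| ≤ A
    · refine ⟨n, ?_, Relation.EqvGen.refl n⟩
      rw [Finset.mem_Icc]
      constructor <;> [linarith [neg_abs_le n]; linarith [le_abs_self n]]
    · push_neg at hcase
      obtain ⟨i, hi, -⟩ := hexact n
      obtain ⟨m, hm⟩ := hi
      have hRmn : R m n := (hR m n).mpr ⟨i, by linarith⟩
      have hmlt : |m| < |n| := by
        have h1 : 2 * |m| ≤ |d i| * |m| :=
          mul_le_mul_of_nonneg_right (hd2 i) (abs_nonneg m)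
        have h2 : |d i| * |m| = |n - a i| := by rw [← abs_mul, ← hm]
        have h3 : |n - a i| ≤ |n| + |a i| := abs_sub _ _
        have h4 := hAi i
        linarith
      have hmk : m.natAbs < k := by
        rw [Int.abs_eq_natAbs, Int.abs_eq_natAbs] at hmlt
        omega
      obtain ⟨t, htT, hrel⟩ := ih m.natAbs hmk m rfl
      exact ⟨t, htT,
        Relation.EqvGen.trans _ _ _
          (Relation.EqvGen.symm _ _ (Relation.EqvGen.rel m n hRmn)) hrel⟩
end

section
/- Let a_i mod d_i (i = 1,…,r) be an exact covering system with all moduli d_i nonzero and degree r ≥ 2, with edge relation R and predecessor function P. Then every component of the associated ECSD contains a cycle: for every integer n there exists an integer m such that n and m are related under EqvGen R and P^[k](m) = m for some k ≥ 1. -/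
/-- Every component of an ECSD of degree at least 2 contains a cycle: every integer
`n` is related under `EqvGen R` to a cyclic vertex `m` (one with `P^[k] m = m` for
some `k ≥ 1`). -/
theorem ecsd_component_has_cycle (r : ℕ) (hr : 2 ≤ r) (a d : Fin r → ℤ)
    (hd : ∀ i, d i ≠ 0)
    (hexact : ∀ n : ℤ, ∃! i : Fin r, d i ∣ n - a i)
    (R : ℤ → ℤ → Prop) (hR : ∀ n m : ℤ, R n m ↔ ∃ i : Fin r, m = d i * n + a i)
    (P : ℤ → ℤ) (hP : ∀ n : ℤ, ∃ i : Fin r, d i * P n + a i = n) :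
    ∀ n : ℤ, ∃ m : ℤ, Relation.EqvGen R n m ∧ ∃ k : ℕ, 1 ≤ k ∧ P^[k] m = m := by
  intro n
  -- every modulus has absolute value at least 2
  haveI : Nontrivial (Fin r) := Fin.nontrivial_iff_two_le.mpr hr
  have hd2 : ∀ i, 2 ≤ |d i| := by
    intro i
    by_contra h
    push_neg at h
    have h1 : 1 ≤ |d i| := Int.one_le_abs (by simpa using hd i)
    have hu : IsUnit (d i) := Int.isUnit_iff_abs_eq.mpr (by omega)
    obtain ⟨j, hj⟩ := exists_ne i
    obtain ⟨k, hk, huniq⟩ := hexact (a j)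
    have hi : k = i := (huniq i (hu.dvd)).symm
    have hjj : k = j := (huniq j (by simp)).symm
    exact hj (hjj ▸ hi)
  -- bound on the translations
  set A : ℤ := ∑ i, |a i| with hA
  have hA0 : 0 ≤ A := Finset.sum_nonneg fun i _ => abs_nonneg _
  have hAi : ∀ i, |a i| ≤ A := fun i =>
    Finset.single_le_sum (f := fun i => |a i|) (fun i _ => abs_nonneg _) (Finset.mem_univ i)
  have hPb : ∀ x : ℤ, 2 * |P x| ≤ |x| + A := by
    intro x
    obtain ⟨i, hi⟩ := hP x
    have h1 : d i * P x = x - a i := by linarith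
    have h2 : |d i| * |P x| = |x - a i| := by rw [← abs_mul, h1]
    have h3 : |x - a i| ≤ |x| + |a i| := abs_sub x (a i)
    have h4 : 2 * |P x| ≤ |d i| * |P x| :=
      mul_le_mul_of_nonneg_right (hd2 i) (abs_nonneg _)
    have := hAi i
    omega
  set M : ℤ := |n| + A with hM
  have hbound : ∀ k : ℕ, |P^[k] n| ≤ M := by
    intro k
    induction k with
    | zero => simp [hM]; linarith
    | succ k ih =>
        rw [Function.iterate_succ_apply']
        have := hPb (P^[k] n)
        have hAn : A ≤ M := le_add_of_nonneg_left (abs_nonneg n)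
        omega
  -- pigeonhole: some iterate repeats
  haveI : Finite ↥(Set.Icc (-M) M) := (Set.finite_Icc (-M) M).to_subtype
  obtain ⟨j, k, hjk, heq⟩ := Finite.exists_ne_map_eq_of_infinite
    (fun k : ℕ => (⟨P^[k] n, Set.mem_Icc.mpr (abs_le.mp (hbound k))⟩ : ↥(Set.Icc (-M) M)))
  have heq' : P^[j] n = P^[k] n := by simpa using Subtype.ext_iff.mp heq
  -- n is related to every iterate of P
  have hrel : ∀ j : ℕ, Relation.EqvGen R n (P^[j] n) := by
    intro j
    induction j with
    | zero => exact Relation.EqvGen.refl n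
    | succ j ih =>
        rw [Function.iterate_succ_apply']
        refine ih.trans _ _ _ (Relation.EqvGen.symm _ _ (Relation.EqvGen.rel _ _ ?_))
        obtain ⟨i, hi⟩ := hP (P^[j] n)
        exact (hR _ _).mpr ⟨i, hi.symm⟩
  have key : ∀ j k : ℕ, j < k → P^[j] n = P^[k] n →
      ∃ m : ℤ, Relation.EqvGen R n m ∧ ∃ k : ℕ, 1 ≤ k ∧ P^[k] m = m := by
    intro j k hlt he
    refine ⟨P^[j] n, hrel j, k - j, by omega, ?_⟩
    have := Function.iterate_add_apply P (k - j) j n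
    rw [show k - j + j = k by omega] at this
    rw [← this, ← he]
  rcases hjk.lt_or_gt with h | h
  · exact key j k h heq'
  · exact key k j h heq'.symm
end

section
/- Let a_i mod d_i (i = 1,…,r) be an exact covering system with all moduli d_i nonzero and degree r ≥ 2, with edge relation R and predecessor function P. Then each component contains at most one cycle: if m and m′ are both cyclic vertices (P^[k](m) = m and P^[k′](m′) = m′ for some k, k′ ≥ 1) and m, m′ are related under EqvGen R, then m′ lies on the same cycle as m, i.e. m′ = P^[j](m) for some j ∈ ℕ. -/
/-- Each component of an ECSD of degree at least 2 contains at most one cycle: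
any two cyclic vertices in the same component lie on the same cycle. -/
theorem ecsd_at_most_one_cycle (r : ℕ) (hr : 2 ≤ r) (a d : Fin r → ℤ)
    (hd : ∀ i, d i ≠ 0)
    (hexact : ∀ n : ℤ, ∃! i : Fin r, d i ∣ n - a i)
    (R : ℤ → ℤ → Prop) (hR : ∀ n m : ℤ, R n m ↔ ∃ i : Fin r, m = d i * n + a i)
    (P : ℤ → ℤ) (hP : ∀ n : ℤ, ∃ i : Fin r, d i * P n + a i = n)
    (m m' : ℤ) (k k' : ℕ) (hk : 1 ≤ k) (hk' : 1 ≤ k')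
    (hm : P^[k] m = m) (hm' : P^[k'] m' = m')
    (hconn : Relation.EqvGen R m m') :
    ∃ j : ℕ, m' = P^[j] m := by
  -- Every vertex has indegree one: R x y → x = P y.
  have hpred : ∀ x y : ℤ, R x y → x = P y := by
    intro x y hxy
    obtain ⟨i, hi⟩ := (hR x y).mp hxy
    obtain ⟨j, hj⟩ := hP y
    obtain ⟨u, _, hu⟩ := hexact y
    have hij : i = j := by
      have h1 : i = u := hu i ⟨x, by linarith⟩
      have h2 : j = u := hu j ⟨P y, by linarith⟩
      rw [h1, h2]
    rw [hij] at hi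
    have : d j * x = d j * P y := by linarith
    exact mul_left_cancel₀ (hd j) this
  -- Connected vertices meet after iterating P.
  have hmeet : ∀ x y : ℤ, Relation.EqvGen R x y → ∃ p q : ℕ, P^[p] x = P^[q] y := by
    intro x y h
    induction h with
    | rel x y hxy => exact ⟨0, 1, (hpred x y hxy).symm ▸ rfl⟩
    | refl x => exact ⟨0, 0, rfl⟩
    | symm x y _ ih => obtain ⟨p, q, hpq⟩ := ih; exact ⟨q, p, hpq.symm⟩
    | trans x y z _ _ ih1 ih2 =>
        obtain ⟨p, q, h1⟩ := ih1
        obtain ⟨s, t, h2⟩ := ih2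
        refine ⟨s + p, q + t, ?_⟩
        rw [Function.iterate_add_apply, Function.iterate_add_apply, h1,
          ← Function.iterate_add_apply, ← Function.iterate_add_apply,
          Nat.add_comm s q, Function.iterate_add_apply, h2,
          ← Function.iterate_add_apply]
  obtain ⟨p, q, hpq⟩ := hmeet m m' hconn
  -- m' is fixed by P^[k'], hence by P^[k' * q].
  have hfix : P^[k' * q] m' = m' := by
    rw [Function.iterate_mul]
    exact Function.iterate_fixed hm' q
  have hq : q ≤ k' * q := Nat.le_mul_of_pos_left q hk'
  refine ⟨k' * q - q + p, ?_⟩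
  have : P^[k' * q - q + q] m' = P^[k' * q - q] (P^[q] m') :=
    Function.iterate_add_apply P _ q m'
  rw [Nat.sub_add_cancel hq, hfix] at this
  rw [this, ← hpq, ← Function.iterate_add_apply]
end

section
/- Let d ≥ 2 be an integer, let D = d or D = −d, and let a_1, …, a_d be integers forming a complete residue system modulo d (for every integer n there is a unique i with d ∣ n − a_i). Let R be the relation on ℤ with R(n, m) iff m = D·n + a_i for some i, and let P : ℤ → ℤ satisfy: for every n there exists i with D·P(n) + a_i = n. Then the following are equivalent: (1) every integer n can be expressed as n = Σ_{j=0}^{k} b_j·D^j for some k ∈ ℕ and some coefficients b_j each belonging to {a_1, …, a_d}; (2) the digraph is connected (every integer is related to 0 under EqvGen R) and 0 is a cyclic vertex (P^[c](0) = 0 for some c ≥ 1). -/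
/-- For an ECSD `G(Dn + a_1, …, Dn + a_d)` with `D = ±d` and `a_1, …, a_d`
a complete residue system mod `d`: every integer has a representation
`Σ_{j=0}^{k} b_j D^j` with digits among the `a_i` if and only if the digraph is
connected and `0` is a cyclic vertex. -/
theorem ecsd_representation_iff_connected_and_zero_cyclic
    (d : ℕ) (hd : 2 ≤ d) (D : ℤ) (hD : D = (d : ℤ) ∨ D = -(d : ℤ))
    (a : Fin d → ℤ)
    (hres : ∀ n : ℤ, ∃! i : Fin d, (d : ℤ) ∣ n - a i)
    (R : ℤ → ℤ → Prop) (hR : ∀ n m : ℤ, R n m ↔ ∃ i : Fin d, m = D * n + a i)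
    (P : ℤ → ℤ) (hP : ∀ n : ℤ, ∃ i : Fin d, D * P n + a i = n) :
    (∀ n : ℤ, ∃ k : ℕ, ∃ b : ℕ → Fin d,
        n = ∑ j ∈ Finset.range (k + 1), a (b j) * D ^ j) ↔
      ((∀ n : ℤ, Relation.EqvGen R n 0) ∧ ∃ c : ℕ, 1 ≤ c ∧ P^[c] 0 = 0) := by
  have hDd : (d : ℤ) ∣ D := by rcases hD with h | h <;> simp [h]
  have hD0 : D ≠ 0 := by rcases hD with h | h <;> subst h <;> omega
  -- basic shift identity for digit sums
  have hshift : ∀ (k : ℕ) (b : ℕ → Fin d),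
      ∑ j ∈ Finset.range (k + 1), a (b j) * D ^ j
        = D * (∑ j ∈ Finset.range k, a (b (j + 1)) * D ^ j) + a (b 0) := by
    intro k b
    rw [Finset.sum_range_succ', Finset.mul_sum, pow_zero, mul_one]
    congr 1
    refine Finset.sum_congr rfl fun j _ => by ring
  -- uniqueness of the predecessor
  have hPuniq : ∀ (n p : ℤ) (i : Fin d), D * p + a i = n → P n = p := by
    intro n p i h
    obtain ⟨j, hj⟩ := hP n
    obtain ⟨i₀, -, huniq⟩ := hres n
    have hdi : ∀ (q : ℤ) (i' : Fin d), D * q + a i' = n → i' = i₀ := by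
      intro q i' h'
      refine huniq i' ?_
      show (d : ℤ) ∣ n - a i'
      have he : n - a i' = D * q := by linarith
      rw [he]
      exact hDd.mul_right q
    have hij : i = j := (hdi p i h).trans (hdi (P n) j hj).symm
    subst hij
    have h2 : D * P n = D * p := by linarith
    exact mul_left_cancel₀ hD0 h2
  -- the step identity for tails of a representation
  have hstep : ∀ (k : ℕ) (b : ℕ → Fin d) (t : ℕ), t ≤ k →
      (∑ j ∈ Finset.range (k + 1 - t), a (b (j + t)) * D ^ j)
        = D * (∑ j ∈ Finset.range (k + 1 - (t + 1)), a (b (j + (t + 1))) * D ^ j)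
          + a (b t) := by
    intro k b t ht
    have h1 : k + 1 - t = (k - t) + 1 := by omega
    have h2 : k + 1 - (t + 1) = k - t := by omega
    rw [h1, h2]
    have := hshift (k - t) (fun j => b (j + t))
    have hsum : ∑ j ∈ Finset.range (k - t), a (b (j + 1 + t)) * D ^ j
        = ∑ j ∈ Finset.range (k - t), a (b (j + (t + 1))) * D ^ j := by
      refine Finset.sum_congr rfl fun j _ => ?_
      rw [show j + 1 + t = j + (t + 1) from by omega]
    rw [this, hsum, Nat.zero_add]
  choose dig hdig using hP
  -- expansion of n along the predecessor chain
  have hchain : ∀ (c : ℕ) (n : ℤ),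
      n = (∑ t ∈ Finset.range c, a (dig (P^[t] n)) * D ^ t) + D ^ c * P^[c] n := by
    intro c n
    induction c with
    | zero => simp
    | succ c ih =>
      rw [Finset.sum_range_succ, Function.iterate_succ_apply']
      have h := hdig (P^[c] n)
      conv_lhs => rw [ih]
      linear_combination (-(D ^ c) : ℤ) * h
  constructor
  · -- representations ⇒ connected ∧ cyclic
    intro hrep
    constructor
    · -- connectivity
      intro n
      obtain ⟨k, b, hb⟩ := hrep n
      have key : ∀ t : ℕ, t ≤ k + 1 →
          Relation.EqvGen R (∑ j ∈ Finset.range t, a (b (j + (k + 1 - t))) * D ^ j) 0 := by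
        intro t
        induction t with
        | zero => intro _; simpa using Relation.EqvGen.refl (0 : ℤ)
        | succ t ih =>
          intro ht
          rw [show k + 1 - (t + 1) = k - t from by omega]
          have hrel : R (∑ j ∈ Finset.range t, a (b (j + (k + 1 - t))) * D ^ j)
              (∑ j ∈ Finset.range (t + 1), a (b (j + (k - t))) * D ^ j) := by
            rw [hR]
            refine ⟨b (k - t), ?_⟩
            have := hshift t (fun j => b (j + (k - t)))
            have hsum : ∑ j ∈ Finset.range t, a (b (j + 1 + (k - t))) * D ^ j
                = ∑ j ∈ Finset.range t, a (b (j + (k + 1 - t))) * D ^ j := by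
              refine Finset.sum_congr rfl fun j _ => ?_
              rw [show j + 1 + (k - t) = j + (k + 1 - t) from by omega]
            rw [this, hsum, Nat.zero_add]
          exact Relation.EqvGen.trans _ _ _
            (Relation.EqvGen.symm _ _ (Relation.EqvGen.rel _ _ hrel))
            (ih (by omega))
      have := key (k + 1) le_rfl
      simp only [Nat.sub_self, Nat.add_zero] at this
      rw [hb]
      exact this
    · -- 0 is cyclic
      obtain ⟨k, b, hb⟩ := hrep 0
      have key : ∀ t : ℕ, t ≤ k + 1 →
          P^[t] 0 = ∑ j ∈ Finset.range (k + 1 - t), a (b (j + t)) * D ^ j := by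
        intro t
        induction t with
        | zero => intro _; simpa using hb
        | succ t ih =>
          intro ht
          rw [Function.iterate_succ_apply', ih (by omega)]
          exact hPuniq _ _ (b t) (hstep k b t (by omega)).symm
      refine ⟨k + 1, by omega, ?_⟩
      have := key (k + 1) le_rfl
      simpa using this
  · -- connected ∧ cyclic ⇒ representations
    rintro ⟨hconn, c, hc1, hcyc⟩
    -- 0 has a representation
    have hS0 : ∃ k : ℕ, ∃ b : ℕ → Fin d,
        (0 : ℤ) = ∑ j ∈ Finset.range (k + 1), a (b j) * D ^ j := by
      refine ⟨c - 1, fun t => dig (P^[t] (0 : ℤ)), ?_⟩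
      have h := hchain c 0
      rw [hcyc, mul_zero, add_zero] at h
      rw [show c - 1 + 1 = c from by omega]
      exact h
    have key : ∀ x y : ℤ, Relation.EqvGen R x y →
        ((∃ k : ℕ, ∃ b : ℕ → Fin d, x = ∑ j ∈ Finset.range (k + 1), a (b j) * D ^ j) ↔
         (∃ k : ℕ, ∃ b : ℕ → Fin d, y = ∑ j ∈ Finset.range (k + 1), a (b j) * D ^ j)) := by
      intro x y h
      induction h with
      | rel x y hxy =>
        rw [hR] at hxy
        obtain ⟨i, rfl⟩ := hxy
        constructor
        · rintro ⟨k, b, rfl⟩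
          refine ⟨k + 1, fun j => match j with | 0 => i | j + 1 => b j, ?_⟩
          rw [hshift (k + 1) _]
        · rintro ⟨k, b, hm⟩
          have hb0 : b 0 = i := by
            obtain ⟨i₀, -, huniq⟩ := hres (D * x + a i)
            have h1 : i = i₀ := by
              refine huniq i ?_
              show (d : ℤ) ∣ D * x + a i - a i
              have he : D * x + a i - a i = D * x := by ring
              rw [he]
              exact hDd.mul_right x
            have h2 : b 0 = i₀ := by
              refine huniq (b 0) ?_
              show (d : ℤ) ∣ D * x + a i - a (b 0)
              have he : D * x + a i - a (b 0)
                  = D * (∑ j ∈ Finset.range k, a (b (j + 1)) * D ^ j) := by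
                rw [hm, hshift k b]; ring
              rw [he]
              exact hDd.mul_right _
            rw [h1, h2]
          have hx : x = ∑ j ∈ Finset.range k, a (b (j + 1)) * D ^ j := by
            rw [hshift k b, hb0] at hm
            have h2 : D * x = D * (∑ j ∈ Finset.range k, a (b (j + 1)) * D ^ j) := by
              linarith
            exact mul_left_cancel₀ hD0 h2
          match k, hx with
          | 0, hx =>
            simp only [Finset.range_zero, Finset.sum_empty] at hx
            rw [hx]
            exact hS0
          | (k' + 1), hx =>
            exact ⟨k', fun j => b (j + 1), hx⟩
      | refl x => exact Iff.rfl
      | symm x y _ ih => exact ih.symm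
      | trans x y z _ _ ih1 ih2 => exact ih1.trans ih2
    intro n
    exact (key n 0 (hconn n)).mpr hS0
end

section
/- Let d ≥ 3 be an integer and t an integer with −(d−1) < t < 0. Then 0 is the only cyclic vertex of the ECSD G(dn+t, dn+t+1, …, dn+t+d−1): if m is an integer, k ≥ 1, and b_0, …, b_{k−1} are integers with t ≤ b_j ≤ t + d − 1 satisfying m = d^k·m + Σ_{j=0}^{k−1} b_j·d^j, then m = 0. -/
/-- For `d ≥ 3` and `-(d-1) < t < 0`, zero is the only cyclic vertex of the
ECSD `G(dn+t, dn+t+1, …, dn+t+d-1)`. -/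
theorem ecsd_nonstandard_dary_zero_only_cyclic
    (d t : ℤ) (hd : 3 ≤ d) (ht₁ : -(d - 1) < t) (ht₂ : t < 0)
    (m : ℤ) (k : ℕ) (hk : 1 ≤ k) (b : ℕ → ℤ)
    (hb : ∀ j < k, t ≤ b j ∧ b j ≤ t + d - 1)
    (hcyc : m = d ^ k * m + ∑ j ∈ Finset.range k, b j * d ^ j) :
    m = 0 := by
  set S := ∑ j ∈ Finset.range k, b j * d ^ j with hSdef
  set G := ∑ j ∈ Finset.range k, d ^ j with hGdef
  have hdpos : (0:ℤ) < d := by linarith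
  have hG : G * (d - 1) = d ^ k - 1 := geom_sum_mul d k
  have hGpos : 0 < G := by
    apply Finset.sum_pos
    · intro i _; positivity
    · exact ⟨0, Finset.mem_range.mpr hk⟩
  have hSlow : t * G ≤ S := by
    rw [hSdef, hGdef, Finset.mul_sum]
    apply Finset.sum_le_sum
    intro j hj
    exact mul_le_mul_of_nonneg_right (hb j (Finset.mem_range.mp hj)).1 (by positivity)
  have hShigh : S ≤ (t + d - 1) * G := by
    rw [hSdef, hGdef, Finset.mul_sum]
    apply Finset.sum_le_sum
    intro j hj
    exact mul_le_mul_of_nonneg_right (hb j (Finset.mem_range.mp hj)).2 (by positivity)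
  have hm : m * (1 - d ^ k) = S := by linear_combination hcyc
  have hPk : (1:ℤ) < d ^ k := by
    nlinarith [mul_pos hGpos (show (0:ℤ) < d - 1 by linarith)]
  rcases lt_trichotomy m 0 with h | h | h
  · -- m ≤ -1 : S = m(1-d^k) ≥ d^k - 1 = G(d-1) > (t+d-1)G
    have h1 : (-m) * (d ^ k - 1) ≥ d ^ k - 1 := by nlinarith
    nlinarith [mul_pos hGpos (show (0:ℤ) < -t by linarith)]
  · exact h
  · -- m ≥ 1 : S = m(1-d^k) ≤ 1 - d^k = -G(d-1) < tG
    have h1 : m * (d ^ k - 1) ≥ d ^ k - 1 := by nlinarith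
    nlinarith [mul_pos hGpos (show (0:ℤ) < t + d - 1 by linarith)]
end

section
/- Let d ≥ 2 be a natural number. Then every integer can be written uniquely in base −d with digit set {0, 1, …, d−1}: for every n ∈ ℤ there exists a unique finitely supported function b : ℕ → ℤ with 0 ≤ b(i) ≤ d − 1 for all i and n = Σ_i b(i)·(−d)^i. -/
private def negDigSum (d : ℕ) (b : ℕ →₀ ℤ) : ℤ := b.sum fun i c => c * (-(d : ℤ)) ^ i

private lemma negDigSum_cons (d : ℕ) (r : ℤ) (b' : ℕ →₀ ℤ) :
    negDigSum d (Finsupp.single 0 r + Finsupp.mapDomain Nat.succ b')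
      = r + (-(d : ℤ)) * negDigSum d b' := by
  unfold negDigSum
  rw [Finsupp.sum_add_index' (fun i => by simp) (fun i b c => add_mul b c _),
      Finsupp.sum_single_index (by simp),
      Finsupp.sum_mapDomain_index (fun i => by simp) (fun i b c => add_mul b c _),
      Finsupp.mul_sum]
  simp only [pow_zero, mul_one]
  congr 1
  apply Finsupp.sum_congr
  intro i _
  rw [pow_succ]
  ring

private lemma tail_decomp (b : ℕ →₀ ℤ) :
    b = Finsupp.single 0 (b 0) +
      Finsupp.mapDomain Nat.succ (Finsupp.comapDomain Nat.succ b (Nat.succ_injective.injOn)) := by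
  ext i
  cases i with
  | zero =>
      have h0 : (0 : ℕ) ∉ Set.range Nat.succ := by simp [Set.range, Nat.succ_ne_zero]
      simp [Finsupp.mapDomain_notin_range _ _ h0]
  | succ j =>
      simp [Finsupp.mapDomain_apply Nat.succ_injective, Finsupp.comapDomain_apply,
        Finsupp.single_apply]

private lemma exists_rep (d : ℕ) (hd : 2 ≤ d) :
    ∀ k : ℕ, ∀ n : ℤ, 2 * n.natAbs + (if n < 0 then 1 else 0) ≤ k →
      ∃ b : ℕ →₀ ℤ, (∀ i, 0 ≤ b i ∧ b i ≤ (d : ℤ) - 1) ∧ negDigSum d b = n := by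
  intro k
  induction k with
  | zero =>
      intro n hn
      have hn0 : n = 0 := by split_ifs at hn <;> omega
      subst hn0
      exact ⟨0, fun i => by constructor <;> simp <;> omega, by simp [negDigSum]⟩
  | succ k ih =>
      intro n hn
      by_cases h0 : n = 0
      · subst h0
        exact ⟨0, fun i => by constructor <;> simp <;> omega, by simp [negDigSum]⟩
      · set q : ℤ := n / (d : ℤ) with hq
        set r : ℤ := n % (d : ℤ) with hr
        have hdpos : (0 : ℤ) < d := by exact_mod_cast by omega
        have hr0 : 0 ≤ r := Int.emod_nonneg n (by omega)
        have hrlt : r < d := Int.emod_lt_of_pos n hdpos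
        have heq : (d : ℤ) * q + r = n := Int.mul_ediv_add_emod n d
        -- measure decrease for -q
        have hmeas : 2 * (-q).natAbs + (if -q < 0 then 1 else 0) ≤ k := by
          rcases lt_trichotomy n 0 with hneg | hz | hpos
          · have hqneg : q < 0 := by nlinarith
            have hqge : n ≤ q := by nlinarith
            split_ifs at hn ⊢ <;> omega
          · exact absurd hz h0
          · have hqnonneg : 0 ≤ q := Int.ediv_nonneg (by omega) (by omega)
            have hqlt : q < n := by nlinarith
            split_ifs at hn ⊢ <;> omega
        obtain ⟨b', hb'dig, hb'sum⟩ := ih (-q) hmeas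
        refine ⟨Finsupp.single 0 r + Finsupp.mapDomain Nat.succ b', ?_, ?_⟩
        · intro i
          cases i with
          | zero =>
              have h0r : (0 : ℕ) ∉ Set.range Nat.succ := by simp [Set.range, Nat.succ_ne_zero]
              simp only [Finsupp.add_apply, Finsupp.single_eq_same,
                Finsupp.mapDomain_notin_range _ _ h0r, add_zero]
              omega
          | succ j =>
              have := hb'dig j
              simp only [Finsupp.add_apply, Finsupp.single_apply,
                Finsupp.mapDomain_apply Nat.succ_injective]
              simpa using this
        · rw [negDigSum_cons, hb'sum]
          push_cast
          linarith [heq]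

private lemma uniq_rep (d : ℕ) (hd : 2 ≤ d) :
    ∀ k : ℕ, ∀ n : ℤ, ∀ b c : ℕ →₀ ℤ,
      b.support ⊆ Finset.range k → c.support ⊆ Finset.range k →
      (∀ i, 0 ≤ b i ∧ b i ≤ (d : ℤ) - 1) → (∀ i, 0 ≤ c i ∧ c i ≤ (d : ℤ) - 1) →
      negDigSum d b = n → negDigSum d c = n → b = c := by
  intro k
  induction k with
  | zero =>
      intro n b c hbs hcs _ _ _ _
      simp only [Finset.range_zero, Finset.subset_empty] at hbs hcs
      rw [Finsupp.support_eq_empty] at hbs hcs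
      rw [hbs, hcs]
  | succ k ih =>
      intro n b c hbs hcs hbd hcd hbsum hcsum
      set tb := Finsupp.comapDomain Nat.succ b (Nat.succ_injective.injOn) with htb
      set tc := Finsupp.comapDomain Nat.succ c (Nat.succ_injective.injOn) with htc
      have hbdec := tail_decomp b
      have hcdec := tail_decomp c
      have hbsum' : b 0 + (-(d : ℤ)) * negDigSum d tb = n := by
        rw [← negDigSum_cons, ← hbdec]; exact hbsum
      have hcsum' : c 0 + (-(d : ℤ)) * negDigSum d tc = n := by
        rw [← negDigSum_cons, ← hcdec]; exact hcsum
      have hdig0 : ∀ (e : ℕ →₀ ℤ) (S : ℤ), (∀ i, 0 ≤ e i ∧ e i ≤ (d : ℤ) - 1) →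
          e 0 + (-(d : ℤ)) * S = n → e 0 = n % d := by
        intro e S hedig hesum
        have h1 : n = e 0 + (d : ℤ) * (-S) := by linarith
        have h2 : n % (d : ℤ) = e 0 % (d : ℤ) := by
          rw [h1]; exact Int.add_mul_emod_self_left ..
        rw [h2, Int.emod_eq_of_lt (hedig 0).1 (by linarith [(hedig 0).2])]
      have hb0 : b 0 = n % d := hdig0 b _ hbd hbsum'
      have hc0 : c 0 = n % d := hdig0 c _ hcd hcsum'
      have hSeq : negDigSum d tb = negDigSum d tc := by
        have hd0 : (-(d : ℤ)) ≠ 0 := by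
          simp only [neg_ne_zero]; exact_mod_cast (by omega : d ≠ 0)
        apply mul_left_cancel₀ hd0
        have : b 0 = c 0 := by rw [hb0, hc0]
        linarith [hbsum', hcsum']
      have htbs : tb.support ⊆ Finset.range k := by
        intro i hi
        have : tb i ≠ 0 := Finsupp.mem_support_iff.mp hi
        have hbi : b (i + 1) ≠ 0 := by
          simpa [htb, Finsupp.comapDomain_apply] using this
        have := hbs (Finsupp.mem_support_iff.mpr hbi)
        simp only [Finset.mem_range] at this ⊢
        omega
      have htcs : tc.support ⊆ Finset.range k := by
        intro i hi
        have : tc i ≠ 0 := Finsupp.mem_support_iff.mp hi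
        have hci : c (i + 1) ≠ 0 := by
          simpa [htc, Finsupp.comapDomain_apply] using this
        have := hcs (Finsupp.mem_support_iff.mpr hci)
        simp only [Finset.mem_range] at this ⊢
        omega
      have htbd : ∀ i, 0 ≤ tb i ∧ tb i ≤ (d : ℤ) - 1 := fun i => by
        simpa [htb, Finsupp.comapDomain_apply] using hbd (i + 1)
      have htcd : ∀ i, 0 ≤ tc i ∧ tc i ≤ (d : ℤ) - 1 := fun i => by
        simpa [htc, Finsupp.comapDomain_apply] using hcd (i + 1)
      have htail : tb = tc := ih (negDigSum d tb) tb tc htbs htcs htbd htcd rfl hSeq.symm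
      rw [hbdec, hcdec, ← htb, ← htc, htail, hb0, hc0]

/-- For a natural number `d ≥ 2`, every integer has a unique base-`(-d)`
representation with digit set `{0, 1, …, d-1}`: a unique finitely supported
`b : ℕ → ℤ` with `0 ≤ b i ≤ d - 1` for all `i` and `n = Σ_i b i * (-d) ^ i`. -/
theorem negative_base_unique_representation (d : ℕ) (hd : 2 ≤ d) :
    ∀ n : ℤ, ∃! b : ℕ →₀ ℤ,
      (∀ i : ℕ, 0 ≤ b i ∧ b i ≤ (d : ℤ) - 1) ∧
        n = b.sum fun i c => c * (-(d : ℤ)) ^ i := by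
  intro n
  obtain ⟨b, hbd, hbsum⟩ := exists_rep d hd (2 * n.natAbs + (if n < 0 then 1 else 0)) n le_rfl
  refine ⟨b, ⟨hbd, hbsum.symm⟩, ?_⟩
  rintro c ⟨hcd, hcsum⟩
  set k := (b.support ∪ c.support).sup id + 1 with hk
  apply uniq_rep d hd k n c b
  · intro i hi
    have := Finset.le_sup (s := b.support ∪ c.support) (f := id) (Finset.mem_union_right _ hi)
    simp only [Finset.mem_range, id_eq] at this ⊢
    omega
  · intro i hi
    have := Finset.le_sup (s := b.support ∪ c.support) (f := id) (Finset.mem_union_left _ hi)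
    simp only [Finset.mem_range, id_eq] at this ⊢
    omega
  · exact hcd
  · exact hbd
  · exact hcsum.symm
  · exact hbsum
end

section
/- Let d ≥ 2 be a natural number. Then 0 is the only cyclic vertex of the ECSD G(−dn, −dn+1, …, −dn+d−1): if m is an integer, k ≥ 1, and b_0, …, b_{k−1} are integers with 0 ≤ b_j ≤ d − 1 satisfying m = (−d)^k·m + Σ_{j=0}^{k−1} b_j·(−d)^j, then m = 0. -/
/-- For a natural number `d ≥ 2`, zero is the only cyclic vertex of the ECSD
`G(-dn, -dn+1, …, -dn+d-1)`. -/
theorem ecsd_negative_base_zero_only_cyclic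
    (d : ℕ) (hd : 2 ≤ d)
    (m : ℤ) (k : ℕ) (hk : 1 ≤ k) (b : ℕ → ℤ)
    (hb : ∀ j < k, 0 ≤ b j ∧ b j ≤ (d : ℤ) - 1)
    (hcyc : m = (-(d : ℤ)) ^ k * m + ∑ j ∈ Finset.range k, b j * (-(d : ℤ)) ^ j) :
    m = 0 := by
  set D : ℤ := (d : ℤ) with hD
  have hD2 : (2:ℤ) ≤ D := by rw [hD]; exact_mod_cast hd
  by_contra hm
  have hm1 : 1 ≤ |m| := Int.one_le_abs (by omega)
  rcases eq_or_lt_of_le hk with hk1 | hk2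
  · -- k = 1
    subst hk1
    simp [Finset.sum_range_one] at hcyc
    obtain ⟨hb0, hb1⟩ := hb 0 (by norm_num)
    rcases le_or_gt 1 m with h1 | h1
    · nlinarith
    · have h2 : m ≤ -1 := by omega
      nlinarith
  · -- k ≥ 2
    have hk2' : 2 ≤ k := hk2
    set S : ℤ := ∑ j ∈ Finset.range k, b j * (-D) ^ j with hS
    set A : ℤ := ∑ j ∈ Finset.Ico 2 k, b j * (-D) ^ j with hA
    -- split off the first two terms
    have hsplit : S = b 0 + b 1 * (-D) + A := by
      rw [hS, hA, ← Finset.sum_range_add_sum_Ico _ hk2', Finset.sum_range_succ,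
        Finset.sum_range_one]
      ring
    have hgeom : (∑ j ∈ Finset.range k, D ^ j) * (D - 1) = D ^ k - 1 := geom_sum_mul D k
    have hgeom2 : (∑ j ∈ Finset.range 2, D ^ j) * (D - 1) = D ^ 2 - 1 := geom_sum_mul D 2
    have hIcoGeom : (∑ j ∈ Finset.Ico 2 k, D ^ j) * (D - 1) = D ^ k - D ^ 2 := by
      have h := Finset.sum_range_add_sum_Ico (fun j => D ^ j) hk2'
      nlinarith [h]
    have hAbound : |A| ≤ D ^ k - D ^ 2 := by
      calc |A| ≤ ∑ j ∈ Finset.Ico 2 k, |b j * (-D) ^ j| := Finset.abs_sum_le_sum_abs _ _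
        _ ≤ ∑ j ∈ Finset.Ico 2 k, (D - 1) * D ^ j := by
            apply Finset.sum_le_sum
            intro j hj
            rw [Finset.mem_Ico] at hj
            obtain ⟨hb0, hb1⟩ := hb j hj.2
            rw [abs_mul, abs_pow, abs_neg, abs_of_nonneg (by omega : (0:ℤ) ≤ D),
              abs_of_nonneg hb0]
            have : (0:ℤ) ≤ D ^ j := by positivity
            nlinarith
        _ = (∑ j ∈ Finset.Ico 2 k, D ^ j) * (D - 1) := by
            rw [Finset.sum_mul]; exact Finset.sum_congr rfl fun j _ => by ring
        _ = D ^ k - D ^ 2 := hIcoGeom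
    obtain ⟨hb00, hb01⟩ := hb 0 (by omega)
    obtain ⟨hb10, hb11⟩ := hb 1 (by omega)
    have hAl := (abs_le.mp hAbound).1
    have hAr := (abs_le.mp hAbound).2
    clear_value S A
    clear hA hAbound hgeom hgeom2 hIcoGeom
    have hb1D : b 1 * D ≤ (D - 1) * D := mul_le_mul_of_nonneg_right hb11 (by omega)
    have hb1D0 : 0 ≤ b 1 * D := mul_nonneg hb10 (by omega)
    have hDsq : 2 * D - 1 ≤ D ^ 2 := by nlinarith [sq_nonneg (D - 1)]
    -- |S| ≤ D^k - D
    have hSbound : |S| ≤ D ^ k - D := by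
      rw [abs_le]
      constructor <;> (rw [hsplit]; linarith)
    have hDk : (0:ℤ) < D ^ k := by positivity
    -- now finish by parity of k
    have hmain : m * (1 - (-D) ^ k) = S := by linarith [hcyc]
    rcases Nat.even_or_odd k with he | ho
    · rw [he.neg_pow] at hmain
      have h1 : |m * (1 - D ^ k)| = |m| * (D ^ k - 1) := by
        rw [abs_mul, abs_of_nonpos (by linarith : 1 - D ^ k ≤ 0)]
        ring
      have h2 : 1 * (D ^ k - 1) ≤ |m| * (D ^ k - 1) :=
        mul_le_mul_of_nonneg_right hm1 (by linarith)
      rw [hmain] at h1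
      linarith [hSbound, h1 ▸ h2]
    · rw [ho.neg_pow] at hmain
      have h1 : |m * (1 - -D ^ k)| = |m| * (D ^ k + 1) := by
        rw [abs_mul, abs_of_nonneg (by linarith : (0:ℤ) ≤ 1 - -D ^ k)]
        ring
      have h2 : 1 * (D ^ k + 1) ≤ |m| * (D ^ k + 1) :=
        mul_le_mul_of_nonneg_right hm1 (by linarith)
      rw [hmain] at h1
      linarith [hSbound, h1 ▸ h2]
end

section
/- Every integer can be represented in base −2 with digit set {1, 4}: for every n ∈ ℤ there exist k ∈ ℕ and coefficients b_0, …, b_k each equal to 1 or 4 such that n = Σ_{j=0}^{k} b_j·(−2)^j. (Equivalently, the ECSD G(−2n+1, −2n+4) has a single component whose cycle contains 0.) -/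
private def RepP (n : ℤ) : Prop :=
  ∃ k : ℕ, ∃ b : ℕ → ℤ,
    (∀ j ≤ k, b j = 1 ∨ b j = 4) ∧
      n = ∑ j ∈ Finset.range (k + 1), b j * (-2 : ℤ) ^ j

private lemma rep_step (b0 m : ℤ) (hb0 : b0 = 1 ∨ b0 = 4) (hm : RepP m) :
    RepP (b0 + (-2) * m) := by
  obtain ⟨k, b, hb, hsum⟩ := hm
  refine ⟨k + 1, fun j => if j = 0 then b0 else b (j - 1), ?_, ?_⟩
  · intro j hj
    cases j with
    | zero => simpa using hb0
    | succ i => simpa using hb i (by omega)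
  · rw [Finset.sum_range_succ']
    simp only [Nat.succ_ne_zero, if_neg, if_pos, Nat.succ_sub_one, pow_zero,
      Nat.add_sub_cancel, mul_one, if_true, reduceIte]
    rw [hsum, Finset.mul_sum]
    rw [add_comm]
    congr 1
    apply Finset.sum_congr rfl
    intro i _
    ring

private lemma rep_all : ∀ N : ℕ, ∀ n : ℤ, n.natAbs ≤ N → RepP n := by
  intro N
  induction N using Nat.strong_induction_on with
  | _ N ih =>
    intro n hn
    by_cases h1 : n = 1
    · exact ⟨0, fun _ => 1, fun j _ => Or.inl rfl, by subst h1; simp⟩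
    by_cases h4 : n = 4
    · exact ⟨0, fun _ => 4, fun j _ => Or.inr rfl, by subst h4; simp⟩
    by_cases hm1 : n = -1
    · exact ⟨1, fun _ => 1, fun j _ => Or.inl rfl, by
        subst hm1; norm_num [Finset.sum_range_succ]⟩
    by_cases h0 : n = 0
    · exact ⟨2, fun j => if j = 2 then 1 else 4, fun j _ => by
        by_cases h : j = 2 <;> simp [h], by
        subst h0; norm_num [Finset.sum_range_succ]⟩
    by_cases hm2 : n = -2
    · exact ⟨3, fun j => if j = 0 then 4 else 1, fun j _ => by
        by_cases h : j = 0 <;> simp [h], by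
        subst hm2; norm_num [Finset.sum_range_succ]⟩
    by_cases hm4 : n = -4
    · exact ⟨1, fun _ => 4, fun j _ => Or.inr rfl, by
        subst hm4; norm_num [Finset.sum_range_succ]⟩
    · have hpar : ∃ b0 m : ℤ, (b0 = 1 ∨ b0 = 4) ∧ n = b0 + (-2) * m := by
        rcases Int.even_or_odd n with ⟨c, hc⟩ | ⟨c, hc⟩
        · exact ⟨4, 2 - c, Or.inr rfl, by omega⟩
        · exact ⟨1, -c, Or.inl rfl, by omega⟩
      obtain ⟨b0, m, hb0, heq⟩ := hpar
      have hlt : m.natAbs < n.natAbs := by rcases hb0 with h | h <;> omega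
      have hm := ih m.natAbs (by omega) m le_rfl
      rw [heq]
      exact rep_step b0 m hb0 hm

/-- Every integer can be represented in base `-2` with digit set `{1, 4}`:
for every `n : ℤ` there exist `k` and digits `b_0, …, b_k ∈ {1, 4}` with
`n = Σ_{j=0}^{k} b_j * (-2) ^ j`. -/
theorem neg_two_base_digits_one_four_representation :
    ∀ n : ℤ, ∃ k : ℕ, ∃ b : ℕ → ℤ,
      (∀ j ≤ k, b j = 1 ∨ b j = 4) ∧
        n = ∑ j ∈ Finset.range (k + 1), b j * (-2 : ℤ) ^ j := by
  intro n
  exact rep_all n.natAbs n le_rfl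
end
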